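/- Let 0 → I → 𝔄 →σ→ A → 0 be an extension of Banach algebras with 𝔄 I = 0. If there exists a continuous antihomomorphism β : A → A with β² = id_A and a continuous linear map α : 𝔄 → 𝔄 with β ∘ σ = σ ∘ α, and if A is essential and projective as a right Banach 𝔄-module via σ, then the extension is admissible, i.e., σ admits a continuous linear right inverse. -/

import Mathlib

noncomputable section

/-- `P`, together with the bilinear map `tmul`, is (a realization of) the projective
tensor product `X ⊗̂ Y` of Banach spaces. -/
structure IsProjTensor {X Y P : Type} [NormedAddCommGroup X] [NormedSpace ℂ X]
    [NormedAddCommGroup Y] [NormedSpace ℂ Y]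
    [NormedAddCommGroup P] [NormedSpace ℂ P]
    (tmul : X →L[ℂ] Y →L[ℂ] P) : Prop where
  norm_tmul_le : ∀ x y, ‖tmul x y‖ ≤ ‖x‖ * ‖y‖
  span_dense :
    (Submodule.span ℂ (Set.range fun xy : X × Y => tmul xy.1 xy.2)).topologicalClosure = ⊤
  lift_exists : ∀ {Z : Type} [NormedAddCommGroup Z] [NormedSpace ℂ Z] [CompleteSpace Z]
      (b : X →L[ℂ] Y →L[ℂ] Z) (M : ℝ), (∀ x y, ‖b x y‖ ≤ M * (‖x‖ * ‖y‖)) →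
      ∃ T : P →L[ℂ] Z, (∀ x y, T (tmul x y) = b x y) ∧ ‖T‖ ≤ M

/- STATEMENT 2 (Lemma 3.1): Let 0 → I → 𝔄 →σ→ A → 0 be an extension of Banach
algebras with 𝔄 I = 0.  Assume there is a continuous antihomomorphism β : A → A
with β² = id and a continuous linear map α : 𝔄 → 𝔄 with β ∘ σ = σ ∘ α, and that
A is essential and projective as a right Banach 𝔄-module via σ (the action being
a · u = a σ(u); projectivity is witnessed by a right 𝔄-module morphism ρ which is
a right inverse of the canonical morphism π : A ⊗̂ 𝔄 → A).  Then the extension is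
admissible: σ has a continuous linear right inverse. -/
theorem extension_admissible_of_projective
    {𝔄 A : Type} [NonUnitalNormedRing 𝔄] [NormedSpace ℂ 𝔄]
    [IsScalarTower ℂ 𝔄 𝔄] [SMulCommClass ℂ 𝔄 𝔄] [CompleteSpace 𝔄]
    [NonUnitalNormedRing A] [NormedSpace ℂ A]
    [IsScalarTower ℂ A A] [SMulCommClass ℂ A A] [CompleteSpace A]
    (σ : 𝔄 →L[ℂ] A) (hσmul : ∀ u v : 𝔄, σ (u * v) = σ u * σ v)
    (hσsurj : Function.Surjective σ)
    (hAI : ∀ u x : 𝔄, σ x = 0 → u * x = 0)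
    -- the antihomomorphism β with β² = id
    (β : A →L[ℂ] A) (hβmul : ∀ a b : A, β (a * b) = β b * β a)
    (hβ2 : ∀ a : A, β (β a) = a)
    -- the continuous linear map α with β ∘ σ = σ ∘ α
    (α : 𝔄 →L[ℂ] 𝔄) (hβσ : ∀ u : 𝔄, β (σ u) = σ (α u))
    -- A is essential as a right 𝔄-module via σ
    (hess : (Submodule.span ℂ {x : A | ∃ (a : A) (u : 𝔄), x = a * σ u}).topologicalClosure = ⊤)
    -- A is projective as a right 𝔄-module via σ: the canonical morphism
    -- π : A ⊗̂ 𝔄 → A, a ⊗ u ↦ a σ(u), has a right 𝔄-module morphism right inverse ρ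
    (P : Type) [NormedAddCommGroup P] [NormedSpace ℂ P] [CompleteSpace P]
    (tmul : A →L[ℂ] 𝔄 →L[ℂ] P) (htp : IsProjTensor tmul)
    (π : P →L[ℂ] A) (hπ : ∀ (a : A) (u : 𝔄), π (tmul a u) = a * σ u)
    (R : P →L[ℂ] 𝔄 →L[ℂ] P) (hR : ∀ (a : A) (v u : 𝔄), R (tmul a v) u = tmul a (v * u))
    (ρ : A →L[ℂ] P) (hρmod : ∀ (a : A) (u : 𝔄), ρ (a * σ u) = R (ρ a) u)
    (hπρ : ∀ a : A, π (ρ a) = a) :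
    -- the extension is admissible
    ∃ κ : A →L[ℂ] 𝔄, ∀ a : A, σ (κ a) = a := by
  obtain ⟨C, hC, hCpre⟩ := σ.exists_preimage_norm_le hσsurj
  -- multiplication by elements of 𝔄 only depends on σ of the other factor
  have hkey : ∀ (u x y : 𝔄), σ x = σ y → u * x = u * y := by
    intro u x y h
    have h0 : u * (x - y) = 0 := hAI u _ (by rw [map_sub, h, sub_self])
    rw [mul_sub, sub_eq_zero] at h0
    exact h0
  -- a (not necessarily linear/bounded) choice of preimages
  have hpre : ∀ a : A, σ ((hσsurj a).choose) = a := fun a => (hσsurj a).choose_spec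
  set pre : A → 𝔄 := fun a => (hσsurj a).choose with hpre_def
  -- the bilinear map b(a, u) = α(u) * pre(β a), well-defined by hkey
  set b₀ : A →ₗ[ℂ] 𝔄 →ₗ[ℂ] 𝔄 := LinearMap.mk₂ ℂ (fun a u => α u * pre (β a))
    (by
      intro a a' u
      rw [← mul_add]
      exact hkey _ _ _ (by rw [hpre, map_add, map_add, hpre, hpre]))
    (by
      intro c a u
      rw [← mul_smul_comm]
      exact hkey _ _ _ (by rw [hpre, map_smul, map_smul, hpre]))
    (by
      intro a u u'
      rw [map_add, add_mul])
    (by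
      intro c a u
      rw [map_smul, smul_mul_assoc]) with hb₀_def
  have hb₀ : ∀ (a : A) (u : 𝔄), b₀ a u = α u * pre (β a) := fun a u => rfl
  have hbound : ∀ (a : A) (u : 𝔄), ‖b₀ a u‖ ≤ C * ‖α‖ * ‖β‖ * ‖a‖ * ‖u‖ := by
    intro a u
    obtain ⟨x, hx, hxn⟩ := hCpre (β a)
    have hval : b₀ a u = α u * x := by
      rw [hb₀]
      exact hkey _ _ _ (by rw [hpre, hx])
    rw [hval]
    calc ‖α u * x‖ ≤ ‖α u‖ * ‖x‖ := norm_mul_le _ _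
      _ ≤ (‖α‖ * ‖u‖) * (C * ‖β a‖) :=
          mul_le_mul (α.le_opNorm u) hxn (norm_nonneg x) (by positivity)
      _ ≤ (‖α‖ * ‖u‖) * (C * (‖β‖ * ‖a‖)) := by
          apply mul_le_mul_of_nonneg_left _ (by positivity)
          exact mul_le_mul_of_nonneg_left (β.le_opNorm a) (le_of_lt hC)
      _ = C * ‖α‖ * ‖β‖ * ‖a‖ * ‖u‖ := by ring
  set b : A →L[ℂ] 𝔄 →L[ℂ] 𝔄 := b₀.mkContinuous₂ (C * ‖α‖ * ‖β‖) hbound with hb_def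
  have hbapp : ∀ (a : A) (u : 𝔄), b a u = α u * pre (β a) := fun a u => rfl
  -- lift b to a continuous linear map T on P
  obtain ⟨T, hT, -⟩ := htp.lift_exists b (C * ‖α‖ * ‖β‖)
    (fun a u => by rw [← mul_assoc]; exact hbound a u)
  -- σ ∘ T = β ∘ π, by density of the span of elementary tensors
  set D : P →L[ℂ] A := σ.comp T - β.comp π with hD_def
  have hDzero : ∀ p : P, D p = 0 := by
    have hle : Submodule.span ℂ (Set.range fun xy : A × 𝔄 => tmul xy.1 xy.2) ≤
        LinearMap.ker (D : P →ₗ[ℂ] A) := by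
      rw [Submodule.span_le]
      rintro _ ⟨⟨a, u⟩, rfl⟩
      simp only [SetLike.mem_coe, LinearMap.mem_ker, ContinuousLinearMap.coe_coe, hD_def,
        ContinuousLinearMap.sub_apply, ContinuousLinearMap.comp_apply]
      rw [hT, hπ, hbapp, sub_eq_zero, hσmul, hpre, hβmul, hβσ]
    have hcl := Submodule.topologicalClosure_minimal _ hle (ContinuousLinearMap.isClosed_ker D)
    rw [htp.span_dense] at hcl
    intro p
    exact LinearMap.mem_ker.mp (hcl Submodule.mem_top)
  -- the desired right inverse
  refine ⟨T.comp (ρ.comp β), fun a => ?_⟩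
  have h1 := hDzero (ρ (β a))
  simp only [hD_def, ContinuousLinearMap.sub_apply, ContinuousLinearMap.comp_apply,
    sub_eq_zero] at h1
  simp only [ContinuousLinearMap.comp_apply]
  rw [h1, hπρ, hβ2]
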